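/- arXiv:2007.09434 — 2 statements merged into one kernel-verified Lean document; each statement's English description precedes it below -/
import Mathlib

section
/- In the stages construction, the map s : (φ̄ × ψ̄)⁻¹(0) → ψ⁻¹(0) defined by s(p, p̄, y) = (p q̄, y) (where p ∈ T*_q G, p̄ ∈ T*_{q̄} K) is well-defined (takes values in ψ⁻¹(0)), surjective with right inverse (p,y) ↦ (p, (q⁻¹p)|_K, y), and equivariant with respect to the G × K × H-action on its domain and G × H-action on its target. -/
open Manifold Topology

noncomputable section

variable {E : Type*} [NormedAddCommGroup E] [NormedSpace ℝ E]
variable {EK : Type*} [NormedAddCommGroup EK] [NormedSpace ℝ EK]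
variable {F : Type*} [NormedAddCommGroup F] [NormedSpace ℝ F]
variable {G : Type*} [TopologicalSpace G] [ChartedSpace E G] [Group G] [LieGroup 𝓘(ℝ, E) (⊤ : ℕ∞) G]
variable {K : Type*} [TopologicalSpace K] [ChartedSpace EK K] [Group K] [LieGroup 𝓘(ℝ, EK) (⊤ : ℕ∞) K]
variable {H : Type*} [TopologicalSpace H] [ChartedSpace F H] [Group H] [LieGroup 𝓘(ℝ, F) (⊤ : ℕ∞) H]

/-- The adjoint representation, as the derivative of conjugation at the identity. -/
def Ad {E' : Type*} [NormedAddCommGroup E'] [NormedSpace ℝ E']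
    {G' : Type*} [TopologicalSpace G'] [ChartedSpace E' G'] [Group G']
    [LieGroup 𝓘(ℝ, E') (⊤ : ℕ∞) G'] (g : G') : E' →L[ℝ] E' :=
  mfderiv 𝓘(ℝ, E') 𝓘(ℝ, E') (fun x => g * x * g⁻¹) (1 : G')

/-- The derivative at the identity of a (smooth) homomorphism of Lie groups, e.g.
the inclusion of Lie algebras induced by the inclusion of a closed subgroup. -/
def dHom {E' F' : Type*} [NormedAddCommGroup E'] [NormedSpace ℝ E']
    [NormedAddCommGroup F'] [NormedSpace ℝ F']
    {G' H' : Type*} [TopologicalSpace G'] [ChartedSpace E' G'] [Group G']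
    [LieGroup 𝓘(ℝ, E') (⊤ : ℕ∞) G'] [TopologicalSpace H'] [ChartedSpace F' H'] [Group H']
    [LieGroup 𝓘(ℝ, F') (⊤ : ℕ∞) H'] (ι : H' →* G') : F' →L[ℝ] E' :=
  mfderiv 𝓘(ℝ, F') 𝓘(ℝ, E') (ι : H' → G') (1 : H')

variable {Y : Type*} [MulAction H Y]
variable (ιKG : K →* G) (ιHK : H →* K)

/-- `M = T*G × T*K × Y`, with both cotangent bundles left-trivialized. -/
abbrev Mspace (E EK : Type*) [NormedAddCommGroup E] [NormedSpace ℝ E]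
    [NormedAddCommGroup EK] [NormedSpace ℝ EK] (G K Y : Type*) :=
  (G × (E →L[ℝ] ℝ)) × (K × (EK →L[ℝ] ℝ)) × Y

/-- `φ̄(p, p̄, y) = p̄ q̄⁻¹ − (q⁻¹ p)|_𝔨`, in left trivialization. -/
def phiBar (m : Mspace E EK G K Y) : EK →L[ℝ] ℝ :=
  m.2.1.2.comp (Ad m.2.1.1⁻¹) - m.1.2.comp (dHom ιKG)

/-- `ψ̄(p, p̄, y) = Ψ(y) − (q̄⁻¹ p̄)|_𝔥`, in left trivialization. -/
def psiBar (Ψ : Y → F →L[ℝ] ℝ) (m : Mspace E EK G K Y) : F →L[ℝ] ℝ :=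
  Ψ m.2.2 - m.2.1.2.comp (dHom ιHK)

/-- `ψ(p, y) = Ψ(y) − (q⁻¹ p)|_𝔥` on `N = T*G × Y`, in left trivialization. -/
def psiN (Ψ : Y → F →L[ℝ] ℝ) (n : (G × (E →L[ℝ] ℝ)) × Y) : F →L[ℝ] ℝ :=
  Ψ n.2 - n.1.2.comp (dHom (ιKG.comp ιHK))

/-- The map `s(p, p̄, y) = (p q̄, y)`: the covector `p q̄ ∈ T*_{q ι(q̄)} G` has left
trivialization `μ ∘ Ad(ι(q̄))`. -/
def sMap (m : Mspace E EK G K Y) : (G × (E →L[ℝ] ℝ)) × Y :=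
  ((m.1.1 * ιKG m.2.1.1, m.1.2.comp (Ad (ιKG m.2.1.1))), m.2.2)

/-- The `G × K × H`-action `(g,k,h)(p, p̄, y) = (g p k⁻¹, k p̄ h⁻¹, h(y))` on `M`. -/
def actGKH (g : G) (k : K) (h : H) (m : Mspace E EK G K Y) : Mspace E EK G K Y :=
  ((g * m.1.1 * (ιKG k)⁻¹, m.1.2.comp (Ad ((ιKG k)⁻¹))),
   (k * m.2.1.1 * (ιHK h)⁻¹, m.2.1.2.comp (Ad ((ιHK h)⁻¹))),
   h • m.2.2)

/-- The `G × H`-action `(g,h)(p, y) = (g p h⁻¹, h(y))` on `N = T*G × Y`. -/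
def actGH (g : G) (h : H) (n : (G × (E →L[ℝ] ℝ)) × Y) : (G × (E →L[ℝ] ℝ)) × Y :=
  ((g * n.1.1 * (ιKG (ιHK h))⁻¹, n.1.2.comp (Ad ((ιKG (ιHK h))⁻¹))), h • n.2)

section AuxLemmas

variable {E' F' : Type*} [NormedAddCommGroup E'] [NormedSpace ℝ E']
    [NormedAddCommGroup F'] [NormedSpace ℝ F']
    {G' H' : Type*} [TopologicalSpace G'] [ChartedSpace E' G'] [Group G']
    [LieGroup 𝓘(ℝ, E') (⊤ : ℕ∞) G'] [TopologicalSpace H'] [ChartedSpace F' H'] [Group H']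
    [LieGroup 𝓘(ℝ, F') (⊤ : ℕ∞) H']

lemma conj_contMDiff (g : G') :
    ContMDiff 𝓘(ℝ, E') 𝓘(ℝ, E') (⊤ : ℕ∞) (fun x => g * x * g⁻¹) :=
  (contMDiff_const.mul contMDiff_id).mul contMDiff_const

lemma conj_mdiff (g : G') (x : G') :
    MDifferentiableAt 𝓘(ℝ, E') 𝓘(ℝ, E') (fun x => g * x * g⁻¹) x :=
  (conj_contMDiff g).mdifferentiableAt (by simp)

lemma Ad_one : Ad (1 : G') = ContinuousLinearMap.id ℝ E' := by
  have : (fun x : G' => (1 : G') * x * (1 : G')⁻¹) = id := by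
    funext x; simp
  rw [Ad, this, mfderiv_id]; rfl

lemma Ad_mul (a b : G') : Ad (a * b) = ((Ad a : E' →L[ℝ] E').comp (Ad b : E' →L[ℝ] E')) := by
  have h : (fun x : G' => (a * b) * x * (a * b)⁻¹)
      = (fun x => a * x * a⁻¹) ∘ (fun x => b * x * b⁻¹) := by
    funext x; simp [mul_assoc]
  have hb1 : (fun x : G' => b * x * b⁻¹) 1 = 1 := by simp
  have hga : MDifferentiableAt 𝓘(ℝ, E') 𝓘(ℝ, E') (fun x => a * x * a⁻¹)
      ((fun x : G' => b * x * b⁻¹) 1) := by rw [hb1]; exact conj_mdiff a 1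
  rw [Ad, h, mfderiv_comp (1 : G') hga (conj_mdiff b 1)]
  have hpt : b * 1 * b⁻¹ = (1 : G') := by simp
  rw [hpt]; rfl

lemma Ad_inv_Ad (k : G') (w : E') : (Ad k⁻¹ : E' →L[ℝ] E') ((Ad k : E' →L[ℝ] E') w) = w := by
  have h : (Ad k⁻¹ : E' →L[ℝ] E').comp (Ad k : E' →L[ℝ] E') = ContinuousLinearMap.id ℝ E' := by
    rw [← Ad_mul, inv_mul_cancel, Ad_one]
  calc (Ad k⁻¹ : E' →L[ℝ] E') ((Ad k : E' →L[ℝ] E') w) = ((Ad k⁻¹ : E' →L[ℝ] E').comp (Ad k : E' →L[ℝ] E')) w := rfl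
    _ = w := by rw [h]; rfl

lemma Ad_dHom (ι : H' →* G') (hι : ContMDiff 𝓘(ℝ, F') 𝓘(ℝ, E') (⊤ : ℕ∞) (ι : H' → G'))
    (k : H') : (Ad (ι k) : E' →L[ℝ] E').comp (dHom ι : F' →L[ℝ] E') = (dHom ι : F' →L[ℝ] E').comp (Ad k : F' →L[ℝ] F') := by
  have h : (fun x => ι k * x * (ι k)⁻¹) ∘ (ι : H' → G')
      = (ι : H' → G') ∘ (fun x => k * x * k⁻¹) := by
    funext x; simp [mul_assoc]
  have h1 : mfderiv 𝓘(ℝ, F') 𝓘(ℝ, E') ((fun x => ι k * x * (ι k)⁻¹) ∘ (ι : H' → G'))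
      (1 : H') = (Ad (ι k) : E' →L[ℝ] E').comp (dHom ι : F' →L[ℝ] E') := by
    have hg : MDifferentiableAt 𝓘(ℝ, E') 𝓘(ℝ, E') (fun x => ι k * x * (ι k)⁻¹)
        ((ι : H' → G') 1) := by rw [map_one]; exact conj_mdiff (ι k) 1
    rw [mfderiv_comp (1 : H') hg (hι.mdifferentiableAt (by simp))]
    have hpt : ι (1 : H') = 1 := map_one ι
    rw [hpt]; rfl
  have h2 : mfderiv 𝓘(ℝ, F') 𝓘(ℝ, E') ((ι : H' → G') ∘ (fun x => k * x * k⁻¹))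
      (1 : H') = (dHom ι : F' →L[ℝ] E').comp (Ad k : F' →L[ℝ] F') := by
    have hk1 : (fun x : H' => k * x * k⁻¹) 1 = 1 := by simp
    have hg : MDifferentiableAt 𝓘(ℝ, F') 𝓘(ℝ, E') (ι : H' → G')
        ((fun x : H' => k * x * k⁻¹) 1) := by
      rw [hk1]; exact hι.mdifferentiableAt (by simp)
    rw [mfderiv_comp (1 : H') hg (conj_mdiff k 1)]
    have hpt : k * 1 * k⁻¹ = (1 : H') := by simp
    rw [hpt]; rfl
  rw [← h1, h, h2]

end AuxLemmas

lemma dHom_comp (ιKG : K →* G) (ιHK : H →* K)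
    (hιKG : ContMDiff 𝓘(ℝ, EK) 𝓘(ℝ, E) (⊤ : ℕ∞) (ιKG : K → G))
    (hιHK : ContMDiff 𝓘(ℝ, F) 𝓘(ℝ, EK) (⊤ : ℕ∞) (ιHK : H → K)) :
    dHom (ιKG.comp ιHK) = ((dHom ιKG : EK →L[ℝ] E).comp (dHom ιHK : F →L[ℝ] EK)) := by
  have h : ((ιKG.comp ιHK : H →* G) : H → G) = (ιKG : K → G) ∘ (ιHK : H → K) := rfl
  have hg : MDifferentiableAt 𝓘(ℝ, EK) 𝓘(ℝ, E) (ιKG : K → G) ((ιHK : H → K) 1) := by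
    rw [map_one]; exact hιKG.mdifferentiableAt (by simp)
  rw [dHom, h, mfderiv_comp (1 : H) hg (hιHK.mdifferentiableAt (by simp))]
  have hpt : ιHK (1 : H) = 1 := map_one ιHK
  rw [hpt]; rfl

/-- In the stages construction, the map
`s(p, p̄, y) = (p q̄, y)` is well-defined from `(φ̄ × ψ̄)⁻¹(0)` to `ψ⁻¹(0)`,
surjective with right inverse `(p, y) ↦ (p, (q⁻¹ p)|_K, y)`, and equivariant
with respect to the `G × K × H`-action on its domain and the `G × H`-action on
its target. -/
theorem sMap_wellDefined_surjective_equivariant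
    (hιKG : ContMDiff 𝓘(ℝ, EK) 𝓘(ℝ, E) (⊤ : ℕ∞) (ιKG : K → G))
    (hιHK : ContMDiff 𝓘(ℝ, F) 𝓘(ℝ, EK) (⊤ : ℕ∞) (ιHK : H → K))
    (Ψ : Y → F →L[ℝ] ℝ)
    (hΨ : ∀ (h : H) (y : Y), Ψ (h • y) = (Ψ y).comp (Ad h⁻¹)) :
    -- well-defined: s takes the zero level of φ̄ × ψ̄ into the zero level of ψ
    (∀ m : Mspace E EK G K Y, phiBar ιKG m = 0 → psiBar ιHK Ψ m = 0 →
      psiN ιKG ιHK Ψ (sMap ιKG m) = 0) ∧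
    -- surjectivity, with the indicated right inverse
    (∀ n : (G × (E →L[ℝ] ℝ)) × Y, psiN ιKG ιHK Ψ n = 0 →
      phiBar ιKG (((n.1.1, n.1.2), ((1 : K), n.1.2.comp (dHom ιKG)), n.2)
        : Mspace E EK G K Y) = 0 ∧
      psiBar ιHK Ψ (((n.1.1, n.1.2), ((1 : K), n.1.2.comp (dHom ιKG)), n.2)
        : Mspace E EK G K Y) = 0 ∧
      sMap ιKG (((n.1.1, n.1.2), ((1 : K), n.1.2.comp (dHom ιKG)), n.2)
        : Mspace E EK G K Y) = n) ∧
    -- equivariance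
    (∀ (g : G) (k : K) (h : H) (m : Mspace E EK G K Y),
      sMap ιKG (actGKH ιKG ιHK g k h m) = actGH ιKG ιHK g h (sMap ιKG m)) := by
  refine ⟨?_, ?_, ?_⟩
  · rintro ⟨⟨q, p⟩, ⟨qb, pb⟩, y⟩ h1 h2
    rw [phiBar, sub_eq_zero] at h1
    rw [psiBar, sub_eq_zero] at h2
    rw [psiN, sub_eq_zero, sMap]
    simp only at h1 h2 ⊢
    rw [h2, dHom_comp ιKG ιHK hιKG hιHK]
    ext v
    have hnat := DFunLike.congr_fun (Ad_dHom ιKG hιKG qb) (dHom ιHK v)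
    have h1' := DFunLike.congr_fun h1 (Ad qb (dHom ιHK v))
    simp only [ContinuousLinearMap.comp_apply] at hnat h1' ⊢
    rw [hnat, ← h1', Ad_inv_Ad]
  · rintro ⟨⟨q, p⟩, y⟩ hn
    rw [psiN, sub_eq_zero] at hn
    refine ⟨?_, ?_, ?_⟩
    · rw [phiBar, sub_eq_zero]
      simp [Ad_one]
    · rw [psiBar, sub_eq_zero]
      simp only
      rw [hn, dHom_comp ιKG ιHK hιKG hιHK]
      ext v; rfl
    · rw [sMap]
      simp [Ad_one]
  · rintro g k h ⟨⟨q, p⟩, ⟨qb, pb⟩, y⟩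
    rw [sMap, actGKH, actGH, sMap]
    simp only [Prod.mk.injEq]
    constructor
    · constructor
      · simp [mul_assoc]
      · ext v
        have h1 : (Ad (ιKG k)⁻¹ : E →L[ℝ] E).comp (Ad (ιKG (k * qb * (ιHK h)⁻¹)) : E →L[ℝ] E)
            = (Ad (ιKG qb) : E →L[ℝ] E).comp (Ad (ιKG (ιHK h))⁻¹ : E →L[ℝ] E) := by
          rw [← Ad_mul, ← Ad_mul]
          congr 1
          simp [map_mul, map_inv, mul_assoc]
        have := DFunLike.congr_fun h1 v
        simp only [ContinuousLinearMap.coe_comp', Function.comp_apply] at this ⊢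
        rw [this]
    · trivial
end
end

section
/- Define the G'-action on X̃' = ℝ² × 𝕋 (coordinates (p,s,z)) by g'·(p,s,z) = (p + e + Re(conj(ib)·e^{i(s+a)}), s + a, z·e^{i[Re(b̄·e^{i(s+a)}) − se − f]}), where g' ∈ G' has parameters a,e,f ∈ ℝ, b ∈ ℂ. This is a group action, and it preserves the contact 1-form ϖ = p·ds + dz/(iz). -/
open Complex

noncomputable section

/-- Elements of the solvable group `G'`, parametrized by `(a, b, e, f)` with
`a, e, f ∈ ℝ`, `b ∈ ℂ`, as in equation (12). -/
structure Gp where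
  a : ℝ
  b : ℂ
  e : ℝ
  f : ℝ

/-- The multiplication of `G'`, induced from multiplication of the matrices of
equation (12). -/
def Gp.mul (g₁ g₂ : Gp) : Gp :=
  ⟨g₁.a + g₂.a, g₁.b + Complex.exp (Complex.I * g₁.a) * g₂.b,
   g₁.e + g₂.e, g₁.f + g₂.f + g₁.e * g₂.a⟩

/-- The identity element of `G'`. -/
def Gp.one : Gp := ⟨0, 0, 0, 0⟩

/-- The `G'`-action on `X̃' = ℝ² × 𝕋` (coordinates `(p, s, z)`, the third
coordinate lying on the unit circle of `ℂ`):
`g'·(p,s,z) = (p + e + Re(conj(ib)·e^{i(s+a)}), s + a, z·e^{i[Re(b̄·e^{i(s+a)}) − se − f]})`. -/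
def Gact (g : Gp) (x : ℝ × ℝ × ℂ) : ℝ × ℝ × ℂ :=
  (x.1 + g.e + ((starRingEnd ℂ) (Complex.I * g.b) * Complex.exp (Complex.I * (x.2.1 + g.a))).re,
   x.2.1 + g.a,
   x.2.2 * Complex.exp (Complex.I *
     ((((starRingEnd ℂ) g.b) * Complex.exp (Complex.I * (x.2.1 + g.a))).re
       - x.2.1 * g.e - g.f)))

/-- `X̃' = ℝ² × 𝕋` as a subset of `ℝ × ℝ × ℂ`. -/
def Xtilde : Set (ℝ × ℝ × ℂ) := {x | ‖x.2.2‖ = 1}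

/-- The contact `1`-form `ϖ = p·ds + dz/(iz)`, evaluated at the point `x` on a
tangent vector `v = (vp, vs, vz)` (with `vz` tangent to the circle at `z = x.2.2`):
`ϖ_x(v) = p·vs + Re(vz/(i z))`. -/
def varpi (x v : ℝ × ℝ × ℂ) : ℝ :=
  x.1 * v.2.1 + (v.2.2 / (Complex.I * x.2.2)).re

/-- Auxiliary algebraic identity used for the compatibility of the action with
the group law. -/
lemma Gact.main_complex (a₁ a₂ s : ℝ) (b₁ b₂ : ℂ) :
    (starRingEnd ℂ) (b₁ + Complex.exp (Complex.I * a₁) * b₂) *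
      Complex.exp (Complex.I * ((s : ℂ) + ((a₁ : ℂ) + (a₂ : ℂ))))
    = (starRingEnd ℂ) b₁ * Complex.exp (Complex.I * (((s : ℂ) + (a₂ : ℂ)) + (a₁ : ℂ)))
      + (starRingEnd ℂ) b₂ * Complex.exp (Complex.I * ((s : ℂ) + (a₂ : ℂ))) := by
  have h : (starRingEnd ℂ) (Complex.exp (Complex.I * (a₁ : ℂ))) =
      Complex.exp (-(Complex.I * (a₁ : ℂ))) := by
    rw [← Complex.exp_conj, map_mul, Complex.conj_I, Complex.conj_ofReal, neg_mul]
  rw [map_add, add_mul, map_mul, h, mul_assoc, mul_left_comm, ← Complex.exp_add]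
  congr 1
  · congr 1; ring
  · congr 1; ring

/-- The formula `Gact` defines an action of `G'` on
`X̃' = ℝ² × 𝕋` (it maps `X̃'` to itself, `1` acts as the identity, and
`Gact (g₁ g₂) = Gact g₁ ∘ Gact g₂`), and this action preserves the contact
`1`-form `ϖ = p·ds + dz/(iz)`: for every `x ∈ X̃'` and every vector `v`
tangent to `X̃'` at `x` (i.e. `Re(z̄·vz) = 0`), the pullback of `ϖ` by
`Gact g` equals `ϖ`. -/
theorem Gact_is_action_and_preserves_varpi :
    (∀ g : Gp, Set.MapsTo (Gact g) Xtilde Xtilde) ∧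
    (∀ x : ℝ × ℝ × ℂ, Gact Gp.one x = x) ∧
    (∀ (g₁ g₂ : Gp) (x : ℝ × ℝ × ℂ), Gact (Gp.mul g₁ g₂) x = Gact g₁ (Gact g₂ x)) ∧
    (∀ (g : Gp) (x : ℝ × ℝ × ℂ), x ∈ Xtilde →
      ∀ v : ℝ × ℝ × ℂ, ((starRingEnd ℂ) x.2.2 * v.2.2).re = 0 →
        varpi (Gact g x) (fderiv ℝ (Gact g) x v) = varpi x v) := by
  refine ⟨?_, ?_, ?_, ?_⟩
  · -- maps X̃' to itself
    intro g x hx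
    simp only [Xtilde, Set.mem_setOf_eq, Gact] at hx ⊢
    simp [hx, Complex.norm_exp]
  · -- identity acts as the identity
    intro x
    simp [Gact, Gp.one]
  · -- compatibility with the group law
    intro g₁ g₂ x
    obtain ⟨p, s, z⟩ := x
    have key := Gact.main_complex g₁.a g₂.a s g₁.b g₂.b
    simp only [Gact, Gp.mul, Prod.mk.injEq]
    push_cast
    refine ⟨?_, by ring, ?_⟩
    · rw [map_mul, mul_assoc, key, mul_add, Complex.add_re,
        map_mul (starRingEnd ℂ) Complex.I g₂.b, map_mul (starRingEnd ℂ) Complex.I g₁.b,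
        ← mul_assoc, ← mul_assoc]
      ring
    · rw [key, mul_assoc, ← Complex.exp_add]
      congr 1
      push_cast [Complex.add_re]
      ring
  · -- invariance of the contact form
    intro g x hx v _hv
    obtain ⟨p, s, z⟩ := x
    have hz : z ≠ 0 := by
      intro h
      rw [Xtilde, Set.mem_setOf_eq] at hx
      simp [h] at hx
    -- abbreviations
    obtain ⟨a, b, e, f⟩ := g
    have ha : Gp.a ⟨a, b, e, f⟩ = a := rfl
    -- basic projections
    set P2 : (ℝ × ℝ × ℂ) →L[ℝ] ℝ :=
      (ContinuousLinearMap.fst ℝ ℝ ℂ).comp (ContinuousLinearMap.snd ℝ ℝ (ℝ × ℂ)) with hP2def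
    set P3 : (ℝ × ℝ × ℂ) →L[ℝ] ℂ :=
      (ContinuousLinearMap.snd ℝ ℝ ℂ).comp (ContinuousLinearMap.snd ℝ ℝ (ℝ × ℂ)) with hP3def
    have hP2 : HasFDerivAt (fun y : ℝ × ℝ × ℂ => y.2.1) P2 (p, s, z) :=
      (hasFDerivAt_fst).comp _ hasFDerivAt_snd
    have hP3 : HasFDerivAt (fun y : ℝ × ℝ × ℂ => y.2.2) P3 (p, s, z) :=
      (hasFDerivAt_snd).comp _ hasFDerivAt_snd
    -- notation
    set c : ℂ := (starRingEnd ℂ) (Complex.I * b) with hc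
    set d : ℂ := (starRingEnd ℂ) b with hd
    set E : ℂ := Complex.exp (Complex.I * ((s : ℂ) + (a : ℂ))) with hE
    -- derivative of t ↦ exp (I * (t + a)) at s
    have hexp : HasDerivAt (fun t : ℝ => Complex.exp (Complex.I * ((t : ℂ) + (a : ℂ))))
        (E * Complex.I) s := by
      have h1 : HasDerivAt (fun t : ℝ => ((t : ℂ) + (a : ℂ))) 1 s := by
        simpa using ((hasDerivAt_id s).ofReal_comp (z := s)).add_const (a : ℂ)
      simpa [hE] using (h1.const_mul Complex.I).cexp
    have hr : HasDerivAt (fun t : ℝ => (c * Complex.exp (Complex.I * ((t : ℝ) + a))).re)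
        (c * (E * Complex.I)).re s := by
      exact Complex.reCLM.hasFDerivAt.comp_hasDerivAt s (hexp.const_mul c)
    have hθ : HasDerivAt
        (fun t : ℝ => (d * Complex.exp (Complex.I * ((t : ℝ) + a))).re - t * e - f)
        ((d * (E * Complex.I)).re - e) s := by
      have h1 : HasDerivAt (fun t : ℝ => (d * Complex.exp (Complex.I * ((t : ℝ) + a))).re)
          (d * (E * Complex.I)).re s := by
        exact Complex.reCLM.hasFDerivAt.comp_hasDerivAt s (hexp.const_mul d)
      simpa using (h1.sub ((hasDerivAt_id s).mul_const e)).sub_const f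
    set θ' : ℝ := (d * (E * Complex.I)).re - e with hθ'
    set Q : ℂ := Complex.exp (Complex.I *
        ((((d * Complex.exp (Complex.I * ((s : ℂ) + (a : ℂ)))).re : ℝ) : ℂ)
          - (s : ℂ) * (e : ℂ) - (f : ℂ))) with hQ
    have hq : HasDerivAt (fun t : ℝ => Complex.exp (Complex.I *
        ((((d * Complex.exp (Complex.I * ((t : ℝ) + a))).re : ℝ) : ℂ)
          - (t : ℂ) * (e : ℂ) - (f : ℂ))))
        (Q * (Complex.I * (θ' : ℂ))) s := by
      have h1 : HasDerivAt (fun t : ℝ =>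
          ((((d * Complex.exp (Complex.I * ((t : ℝ) + a))).re - t * e - f : ℝ)) : ℂ))
          ((θ' : ℂ)) s := hθ.ofReal_comp
      have h2 := (h1.const_mul Complex.I).cexp
      have h3 : (fun t : ℝ => Complex.exp (Complex.I *
          ((((d * Complex.exp (Complex.I * ((t : ℝ) + a))).re - t * e - f : ℝ)) : ℂ))) =
          (fun t : ℝ => Complex.exp (Complex.I *
          ((((d * Complex.exp (Complex.I * ((t : ℝ) + a))).re : ℝ) : ℂ)
            - (t : ℂ) * (e : ℂ) - (f : ℂ)))) := by
        funext t; push_cast; ring_nf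
      rw [h3] at h2
      convert h2 using 1
      rw [hQ]
      push_cast
      ring_nf
    -- the full derivative
    set r' : ℝ := (c * (E * Complex.I)).re with hr'
    set q' : ℂ := Q * (Complex.I * (θ' : ℂ)) with hq'
    set L : (ℝ × ℝ × ℂ) →L[ℝ] (ℝ × ℝ × ℂ) :=
      ((ContinuousLinearMap.fst ℝ ℝ (ℝ × ℂ)) +
        (ContinuousLinearMap.smulRight (1 : ℝ →L[ℝ] ℝ) r').comp P2).prod
      (P2.prod
        (z • ((ContinuousLinearMap.smulRight (1 : ℝ →L[ℝ] ℝ) q').comp P2) + Q • P3)) with hL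
    have hF : HasFDerivAt (Gact ⟨a, b, e, f⟩) L (p, s, z) := by
      refine HasFDerivAt.prodMk ?_ (HasFDerivAt.prodMk ?_ ?_)
      · exact ((hasFDerivAt_fst).add_const e).add (by have := (hr.hasFDerivAt).comp _ hP2; exact this)
      · exact hP2.add_const a
      · exact hP3.mul (by have := (hq.hasFDerivAt).comp _ hP2; exact this)
    rw [hF.fderiv]
    have hLv1 : (L v).1 = v.1 + v.2.1 * r' := by
      simp [hL, hP2def, hP3def, mul_comm]
    have hLv2 : (L v).2.1 = v.2.1 := by simp [hL, hP2def, hP3def]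
    have hLv3 : (L v).2.2 = z * ((v.2.1 : ℂ) * q') + Q * v.2.2 := by
      simp [hL, hP2def, hP3def, Complex.real_smul]
    have hQ0 : Q ≠ 0 := Complex.exp_ne_zero _
    have hkey : (z * ((v.2.1 : ℂ) * q') + Q * v.2.2) / (Complex.I * (z * Q)) =
        ((θ' * v.2.1 : ℝ) : ℂ) + v.2.2 / (Complex.I * z) := by
      rw [hq']
      push_cast
      field_simp
    have hsum : (c * E).re = -((d * (E * Complex.I)).re) := by
      have : c * E = -(d * (E * Complex.I)) := by
        rw [hc, hd, map_mul, Complex.conj_I]; ring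
      rw [this, Complex.neg_re]
    simp only [varpi, Gact, hLv1, hLv2, hLv3]
    rw [hkey]
    rw [Complex.add_re, Complex.ofReal_re]
    rw [hθ', hsum]
    ring_nf
end
end
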